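/- Let A be an irreducible n×n real stochastic matrix of period t, with surjective periodic partition P : {1,…,n} → ℤ/tℤ (A_{ij} > 0 implies P(j) = P(i) + 1), where t is the exact period in the sense that there exists m ≥ 1 such that (A^{mt})_{ij} > 0 whenever P(i) = P(j). Let X be an n×n symmetric matrix with nonnegative entries satisfying A X Aᵀ = X, and let δ ≥ 0 be such that X^{(δ)} ≠ 0. Set c = tr(X X^{(δ)}) / tr((X^{(δ)})²). Then every entry of X − c X^{(δ)} is nonnegative. -/
import Mathlib


open Matrix BigOperators

/-- The circular distance between the periodic classes of `i` and `j`: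
`min (a, t - a)` where `a ∈ {0, …, t-1}` represents `P j - P i` in `ℤ/tℤ`. -/
def cdist {n t : ℕ} (P : Fin n → ZMod t) (i j : Fin n) : ℕ :=
  min (P j - P i).val (t - (P j - P i).val)

/-- The 0-1 indicator matrix `X⁽δ⁾` of the relation `dist(i,j) = δ`. -/
def indMat {n t : ℕ} (P : Fin n → ZMod t) (δ : ℕ) : Matrix (Fin n) (Fin n) ℝ :=
  Matrix.of fun i j => if cdist P i j = δ then 1 else 0

/-- For an irreducible stochastic matrix `A` of exact period `t` with periodic
partition `P`, and a nonnegative symmetric solution `X` of `A X Aᵀ = X`, the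
matrix `X - c X⁽δ⁾` with `c = tr(X X⁽δ⁾)/tr((X⁽δ⁾)²)` still has nonnegative
entries. -/
theorem level2_solution_sub_projection_nonneg {n t : ℕ} (ht : 1 ≤ t)
    (A : Matrix (Fin n) (Fin n) ℝ)
    (hAnn : ∀ i j, 0 ≤ A i j) (hrow : ∀ i, ∑ j, A i j = 1)
    (hirr : ∀ i j, ∃ m : ℕ, 1 ≤ m ∧ 0 < (A ^ m) i j)
    (P : Fin n → ZMod t) (hPsurj : Function.Surjective P)
    (hP : ∀ i j, 0 < A i j → P j = P i + 1)
    (hexact : ∃ m : ℕ, 1 ≤ m ∧ ∀ i j, P i = P j → 0 < (A ^ (m * t)) i j)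
    (X : Matrix (Fin n) (Fin n) ℝ) (hsym : X.IsSymm)
    (hXnn : ∀ i j, 0 ≤ X i j)
    (hfix : A * X * Aᵀ = X)
    (δ : ℕ) (hδ : indMat P δ ≠ 0) :
    ∀ i j, 0 ≤ (X - (Matrix.trace (X * indMat P δ) /
      Matrix.trace (indMat P δ * indMat P δ)) • indMat P δ) i j := by
  haveI : NeZero t := ⟨by omega⟩
  -- powers of A are nonnegative
  have hApow_nn : ∀ (m : ℕ) i j, 0 ≤ (A ^ m) i j := by
    intro m
    induction m with
    | zero => intro i j; simp [Matrix.one_apply]; split <;> norm_num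
    | succ m ih =>
      intro i j
      rw [pow_succ, Matrix.mul_apply]
      exact Finset.sum_nonneg fun k _ => mul_nonneg (ih i k) (hAnn k j)
  -- powers of A have row sums 1
  have hApow_row : ∀ (m : ℕ) i, ∑ j, (A ^ m) i j = 1 := by
    intro m
    induction m with
    | zero => intro i; simp [Matrix.one_apply]
    | succ m ih =>
      intro i
      simp only [pow_succ, Matrix.mul_apply]
      rw [Finset.sum_comm]
      calc ∑ k, ∑ j, (A ^ m) i k * A k j = ∑ k, (A ^ m) i k * ∑ j, A k j := by
            simp [Finset.mul_sum]
        _ = 1 := by simp [hrow, ih i]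
  -- positivity of a power shifts P by m
  have hPpow : ∀ (m : ℕ) i j, 0 < (A ^ m) i j → P j = P i + (m : ZMod t) := by
    intro m
    induction m with
    | zero =>
      intro i j h
      simp only [pow_zero, Matrix.one_apply] at h
      split at h
      · subst ‹i = j›; simp
      · norm_num at h
    | succ m ih =>
      intro i j h
      rw [pow_succ, Matrix.mul_apply] at h
      have : ∃ k, 0 < (A ^ m) i k * A k j := by
        by_contra hc
        push_neg at hc
        have : ∑ k, (A ^ m) i k * A k j ≤ 0 := Finset.sum_nonpos fun k _ => hc k
        linarith
      obtain ⟨k, hk⟩ := this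
      have h1 : 0 < (A ^ m) i k := by
        rcases (hApow_nn m i k).lt_or_eq with h' | h'
        · exact h'
        · rw [← h'] at hk; simp at hk
      have h2 : 0 < A k j := by
        rcases (hAnn k j).lt_or_eq with h' | h'
        · exact h'
        · rw [← h'] at hk; simp at hk
      rw [hP k j h2, ih i k h1]
      push_cast
      ring
  -- the fixed point equation for powers
  have hfixpow : ∀ (m : ℕ), A ^ m * X * (A ^ m)ᵀ = X := by
    intro m
    induction m with
    | zero => simp
    | succ m ih =>
      rw [pow_succ, Matrix.transpose_mul]
      calc A ^ m * A * X * (Aᵀ * (A ^ m)ᵀ) = A ^ m * (A * X * Aᵀ) * (A ^ m)ᵀ := by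
            noncomm_ring
        _ = X := by rw [hfix, ih]
  -- entrywise version
  have hentry : ∀ (m : ℕ) i j, X i j = ∑ k, ∑ l, (A ^ m) i k * (A ^ m) j l * X k l := by
    intro m i j
    conv_lhs => rw [← hfixpow m]
    rw [Matrix.mul_apply]
    simp only [Matrix.mul_apply, Matrix.transpose_apply, Finset.sum_mul]
    rw [Finset.sum_comm]
    exact Finset.sum_congr rfl fun k _ => Finset.sum_congr rfl fun l _ => by ring
  -- block constancy
  obtain ⟨m₀, hm₀, hB⟩ := hexact
  have hBnn : ∀ i j, 0 ≤ (A ^ (m₀ * t)) i j := hApow_nn _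
  have hBrow : ∀ i, ∑ j, (A ^ (m₀ * t)) i j = 1 := hApow_row _
  have hcast0 : ((m₀ * t : ℕ) : ZMod t) = 0 := by push_cast [ZMod.natCast_self]; ring
  have hBP : ∀ i k, 0 < (A ^ (m₀ * t)) i k → P k = P i := by
    intro i k h
    have := hPpow (m₀ * t) i k h
    rwa [hcast0, add_zero] at this
  have hblock : ∀ i j k l, P k = P i → P l = P j → X k l = X i j := by
    intro i j k l hk hl
    obtain ⟨⟨k₀, l₀⟩, hmem, hmax⟩ := Finset.exists_max_image
      (Finset.univ.filter fun p : Fin n × Fin n => P p.1 = P i ∧ P p.2 = P j)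
      (fun p => X p.1 p.2) ⟨(i, j), by simp⟩
    simp only [Finset.mem_filter, Finset.mem_univ, true_and] at hmem
    have hall : ∀ a b, P a = P i → P b = P j → X a b = X k₀ l₀ := by
      intro a b ha hb
      have hw1 : ∑ c, ∑ d, (A ^ (m₀ * t)) k₀ c * (A ^ (m₀ * t)) l₀ d = 1 := by
        rw [← Finset.sum_mul_sum, hBrow, hBrow, one_mul]
      have hsum0 : ∑ c, ∑ d,
          (A ^ (m₀ * t)) k₀ c * (A ^ (m₀ * t)) l₀ d * (X k₀ l₀ - X c d) = 0 := by
        have h2 := hentry (m₀ * t) k₀ l₀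
        have : ∑ c, ∑ d, (A ^ (m₀ * t)) k₀ c * (A ^ (m₀ * t)) l₀ d * (X k₀ l₀ - X c d)
            = (∑ c, ∑ d, (A ^ (m₀ * t)) k₀ c * (A ^ (m₀ * t)) l₀ d) * X k₀ l₀
              - ∑ c, ∑ d, (A ^ (m₀ * t)) k₀ c * (A ^ (m₀ * t)) l₀ d * X c d := by
          rw [Finset.sum_mul, ← Finset.sum_sub_distrib]
          refine Finset.sum_congr rfl fun c _ => ?_
          rw [Finset.sum_mul, ← Finset.sum_sub_distrib]
          exact Finset.sum_congr rfl fun d _ => by ring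
        rw [this, hw1, ← h2]
        ring
      have htnn : ∀ c d, 0 ≤ (A ^ (m₀ * t)) k₀ c * (A ^ (m₀ * t)) l₀ d * (X k₀ l₀ - X c d) := by
        intro c d
        rcases (mul_nonneg (hBnn k₀ c) (hBnn l₀ d)).lt_or_eq with hw | hw
        · have h1 : 0 < (A ^ (m₀ * t)) k₀ c := by
            rcases (hBnn k₀ c).lt_or_eq with h' | h'
            · exact h'
            · rw [← h'] at hw; simp at hw
          have h2 : 0 < (A ^ (m₀ * t)) l₀ d := by
            rcases (hBnn l₀ d).lt_or_eq with h' | h'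
            · exact h'
            · rw [← h'] at hw; simp at hw
          have hc : P c = P i := (hBP k₀ c h1).trans hmem.1
          have hd : P d = P j := (hBP l₀ d h2).trans hmem.2
          have := hmax (c, d) (by simp [hc, hd])
          exact mul_nonneg hw.le (by simpa using sub_nonneg.mpr this)
        · rw [← hw, zero_mul]
      have hinner : ∀ c ∈ Finset.univ, (0:ℝ) ≤ ∑ d,
          (A ^ (m₀ * t)) k₀ c * (A ^ (m₀ * t)) l₀ d * (X k₀ l₀ - X c d) :=
        fun c _ => Finset.sum_nonneg fun d _ => htnn c d
      have hinner0 := (Finset.sum_eq_zero_iff_of_nonneg hinner).mp hsum0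
      have hterm0 : ∀ c d,
          (A ^ (m₀ * t)) k₀ c * (A ^ (m₀ * t)) l₀ d * (X k₀ l₀ - X c d) = 0 := by
        intro c d
        exact (Finset.sum_eq_zero_iff_of_nonneg (fun d _ => htnn c d)).mp
          (hinner0 c (Finset.mem_univ c)) d (Finset.mem_univ d)
      have hwpos : 0 < (A ^ (m₀ * t)) k₀ a * (A ^ (m₀ * t)) l₀ b :=
        mul_pos (hB k₀ a (hmem.1.trans ha.symm)) (hB l₀ b (hmem.2.trans hb.symm))
      have := hterm0 a b
      have hdiff : X k₀ l₀ - X a b = 0 := by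
        rcases mul_eq_zero.mp this with h | h
        · exact absurd h hwpos.ne'
        · exact h
      linarith
    rw [hall k l hk hl, hall i j rfl rfl]
  -- positive entry in each row
  have hrowpos : ∀ i, ∃ k, 0 < A i k := by
    intro i
    by_contra hc
    push_neg at hc
    have : ∑ j, A i j ≤ 0 := Finset.sum_nonpos fun j _ => hc j
    rw [hrow i] at this; linarith
  -- shift invariance
  have hstep : ∀ (s : ℕ) (i j : Fin n), ∃ k l,
      P k = P i + (s : ZMod t) ∧ P l = P j + (s : ZMod t) ∧ X k l = X i j := by
    intro s
    induction s with
    | zero => intro i j; exact ⟨i, j, by simp, by simp, rfl⟩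
    | succ s ih =>
      intro i j
      obtain ⟨k, l, hk, hl, hX⟩ := ih i j
      obtain ⟨k', hk'⟩ := hrowpos k
      obtain ⟨l', hl'⟩ := hrowpos l
      have hPk' : P k' = P k + 1 := hP _ _ hk'
      have hPl' : P l' = P l + 1 := hP _ _ hl'
      refine ⟨k', l', by rw [hPk', hk]; push_cast; ring, by rw [hPl', hl]; push_cast; ring, ?_⟩
      rw [← hX]
      have h1 := hentry 1 k l
      simp only [pow_one] at h1
      have hw1 : ∑ a, ∑ b, A k a * A l b = 1 := by
        rw [← Finset.sum_mul_sum, hrow, hrow, one_mul]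
      have : X k l = ∑ a, ∑ b, A k a * A l b * X k' l' := by
        rw [h1]
        refine Finset.sum_congr rfl fun a _ => Finset.sum_congr rfl fun b _ => ?_
        rcases (mul_nonneg (hAnn k a) (hAnn l b)).lt_or_eq with hw | hw
        · have ha : 0 < A k a := by
            rcases (hAnn k a).lt_or_eq with h' | h'
            · exact h'
            · rw [← h'] at hw; simp at hw
          have hb : 0 < A l b := by
            rcases (hAnn l b).lt_or_eq with h' | h'
            · exact h'
            · rw [← h'] at hw; simp at hw
          rw [hblock k' l' a b ((hP _ _ ha).trans hPk'.symm) ((hP _ _ hb).trans hPl'.symm)]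
        · rw [← hw, zero_mul, zero_mul]
      have hfin : ∑ a, ∑ b, A k a * A l b * X k' l' = X k' l' := by
        calc ∑ a, ∑ b, A k a * A l b * X k' l'
            = (∑ a, ∑ b, A k a * A l b) * X k' l' := by
              rw [Finset.sum_mul]
              exact Finset.sum_congr rfl fun a _ => by rw [Finset.sum_mul]
          _ = X k' l' := by rw [hw1, one_mul]
      rw [this, hfin]
  have hcastval : ∀ a : ZMod t, ((a.val : ℕ) : ZMod t) = a := by
    intro a; simp [ZMod.natCast_val, ZMod.cast_id]
  -- X depends only on the difference of classes
  have hdiff : ∀ i j p q, P q - P p = P j - P i → X p q = X i j := by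
    intro i j p q h
    obtain ⟨k, l, hk, hl, hX⟩ := hstep (P p - P i).val i j
    rw [hcastval] at hk hl
    have hk' : P k = P p := by rw [hk]; ring
    have hl' : P l = P q := by rw [hl]; linear_combination -h
    rw [← hX]
    exact hblock k l p q hk'.symm hl'.symm
  -- X depends only on cdist
  have hcd : ∀ i j p q, cdist P i j = cdist P p q → X i j = X p q := by
    intro i j p q h
    unfold cdist at h
    have ha := ZMod.val_lt (P j - P i)
    have hb := ZMod.val_lt (P q - P p)
    have hcase : (P j - P i).val = (P q - P p).val ∨
        (P j - P i).val + (P q - P p).val = t := by omega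
    rcases hcase with hc | hc
    · have : P j - P i = P q - P p := by
        rw [← hcastval (P j - P i), ← hcastval (P q - P p), hc]
      exact (hdiff i j p q this.symm).symm
    · have : (P j - P i) + (P q - P p) = 0 := by
        rw [← hcastval (P j - P i), ← hcastval (P q - P p), ← Nat.cast_add, hc,
          ZMod.natCast_self]
      have h2 : P q - P p = P i - P j := by linear_combination this
      have := hdiff j i p q h2
      rw [this, hsym.apply i j]
  -- a witness pair with cdist = δ
  have hwit : ∃ i₀ j₀, cdist P i₀ j₀ = δ := by
    by_contra hc
    push_neg at hc
    apply hδ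
    ext i j
    simp [indMat, hc i j]
  obtain ⟨i₀, j₀, hi₀⟩ := hwit
  set v := X i₀ j₀ with hv
  set Y := indMat P δ with hY
  -- trace computations
  set N : ℝ := ∑ i, ∑ j, (if cdist P i j = δ then (1:ℝ) else 0) with hN
  have htr1 : Matrix.trace (X * Y) = v * N := by
    rw [Matrix.trace, Finset.mul_sum]
    refine Finset.sum_congr rfl fun i _ => ?_
    rw [Matrix.diag_apply, Matrix.mul_apply, Finset.mul_sum]
    refine Finset.sum_congr rfl fun j _ => ?_
    simp only [hY, indMat, Matrix.of_apply]
    have hsymcd : cdist P j i = cdist P i j := by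
      unfold cdist
      have : P i - P j = -(P j - P i) := by ring
      rw [this, ZMod.neg_val]
      have := ZMod.val_lt (P j - P i)
      split
      · have h0 : (P j - P i).val = 0 := by
          rwa [ZMod.val_eq_zero]
        omega
      · omega
    rw [hsymcd]
    split
    · rw [mul_one, mul_one, hcd i j i₀ j₀ (by rw [‹cdist P i j = δ›, hi₀])]
    · ring
  have htr2 : Matrix.trace (Y * Y) = N := by
    rw [Matrix.trace]
    refine Finset.sum_congr rfl fun i _ => ?_
    rw [Matrix.diag_apply, Matrix.mul_apply]
    refine Finset.sum_congr rfl fun j _ => ?_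
    simp only [hY, indMat, Matrix.of_apply]
    have hsymcd : cdist P j i = cdist P i j := by
      unfold cdist
      have : P i - P j = -(P j - P i) := by ring
      rw [this, ZMod.neg_val]
      have := ZMod.val_lt (P j - P i)
      split
      · have h0 : (P j - P i).val = 0 := by rwa [ZMod.val_eq_zero]
        omega
      · omega
    rw [hsymcd]
    split <;> ring
  have hNpos : 0 < N := by
    rw [hN]
    refine Finset.sum_pos' (fun i _ => Finset.sum_nonneg fun j _ => by positivity) ⟨i₀, Finset.mem_univ i₀, ?_⟩
    refine Finset.sum_pos' (fun j _ => by positivity) ⟨j₀, Finset.mem_univ j₀, ?_⟩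
    simp [hi₀]
  have hcval : Matrix.trace (X * Y) / Matrix.trace (Y * Y) = v := by
    rw [htr1, htr2, mul_div_assoc, div_self hNpos.ne', mul_one]
  -- conclusion
  intro i j
  rw [Matrix.sub_apply, Matrix.smul_apply, hcval]
  simp only [hY, indMat, Matrix.of_apply]
  split
  · rw [smul_eq_mul, mul_one]
    have : X i j = v := hcd i j i₀ j₀ (by rw [‹cdist P i j = δ›, hi₀])
    rw [this]; ring_nf; exact le_refl 0
  · rw [smul_eq_mul, mul_zero, sub_zero]
    exact hXnn i j
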